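/- For the loop L = ℤ × ℤ with product (p,q)·(p',q') = (p+p', q+q'+C(p,2)·p'), the left multiplication group LMlt(L) is nilpotent of class at most 2: every triple iterated commutator [F₁,[F₂,F₃]] of elements of the group generated by the left translations is the identity. -/

import Mathlib

/-- C(p,2) = p(p-1)/2 for an arbitrary integer p. -/
def c2 (p : ℤ) : ℤ := p * (p - 1) / 2

/-- Left translation L_c by c in the loop L = ℤ × ℤ with product
(p,q)·(p',q') = (p+p', q+q'+C(p,2)·p'), as a permutation of L. -/
def Ltrans (c : ℤ × ℤ) : Equiv.Perm (ℤ × ℤ) where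
  toFun x := (c.1 + x.1, c.2 + x.2 + c2 c.1 * x.1)
  invFun y := (y.1 - c.1, y.2 - c.2 - c2 c.1 * (y.1 - c.1))
  left_inv x := by
    refine Prod.ext (by dsimp; ring) ?_
    dsimp
    ring
  right_inv y := by
    refine Prod.ext (by dsimp; ring) ?_
    dsimp
    ring

/-- The commutator F⁻¹ ∘ G⁻¹ ∘ F ∘ G of two permutations. -/
def pcomm (F G : Equiv.Perm (ℤ × ℤ)) : Equiv.Perm (ℤ × ℤ) := F⁻¹ * G⁻¹ * F * G


/-- Affine normal form for elements of the left multiplication group. -/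
def Q (a α β : ℤ) (F : Equiv.Perm (ℤ × ℤ)) : Prop :=
  ∀ x : ℤ × ℤ, F x = (a + x.1, x.2 + α * x.1 + β)

lemma Q_one : Q 0 0 0 1 := by
  intro x; refine Prod.ext (by dsimp; ring) (by dsimp; ring)

lemma Q_mul {a α β b γ δ : ℤ} {F G : Equiv.Perm (ℤ × ℤ)}
    (h : Q a α β F) (h' : Q b γ δ G) :
    Q (a + b) (α + γ) (α * b + β + δ) (F * G) := by
  intro x
  rw [Equiv.Perm.mul_apply, h' x, h]
  refine Prod.ext (by dsimp; ring) (by dsimp; ring)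

lemma Q_inv {a α β : ℤ} {F : Equiv.Perm (ℤ × ℤ)} (h : Q a α β F) :
    Q (-a) (-α) (α * a - β) F⁻¹ := by
  intro x
  apply F.injective
  rw [show F (F⁻¹ x) = x from F.apply_symm_apply x, h]
  refine Prod.ext (by dsimp; ring) (by dsimp; ring)

lemma Q_pcomm {a α β b γ δ : ℤ} {F G : Equiv.Perm (ℤ × ℤ)}
    (h : Q a α β F) (h' : Q b γ δ G) :
    Q 0 0 (α * b - γ * a) (pcomm F G) := by
  have key := Q_mul (Q_mul (Q_mul (Q_inv h) (Q_inv h')) h) h'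
  intro x
  rw [pcomm, key x]
  refine Prod.ext (by dsimp; ring) (by dsimp; ring)

lemma mem_aff {F : Equiv.Perm (ℤ × ℤ)}
    (h : F ∈ Subgroup.closure (Set.range Ltrans)) :
    ∃ a α β : ℤ, Q a α β F := by
  induction h using Subgroup.closure_induction with
  | mem F hF =>
      obtain ⟨c, rfl⟩ := hF
      exact ⟨c.1, c2 c.1, c.2, fun x => Prod.ext (by dsimp [Ltrans]) (by dsimp [Ltrans]; ring)⟩
  | one => exact ⟨0, 0, 0, Q_one⟩
  | mul F G _ _ hF hG =>
      obtain ⟨a, α, β, hF⟩ := hF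
      obtain ⟨b, γ, δ, hG⟩ := hG
      exact ⟨_, _, _, Q_mul hF hG⟩
  | inv F _ hF =>
      obtain ⟨a, α, β, hF⟩ := hF
      exact ⟨_, _, _, Q_inv hF⟩

/-- The left multiplication group of the loop L = ℤ × ℤ with product
(p,q)·(p',q') = (p+p', q+q'+C(p,2)·p') is nilpotent of class at most 2:
every triple iterated commutator of elements of the subgroup generated by
the left translations is the identity. -/
theorem stmt6 (F₁ F₂ F₃ : Equiv.Perm (ℤ × ℤ))
    (h₁ : F₁ ∈ Subgroup.closure (Set.range Ltrans))
    (h₂ : F₂ ∈ Subgroup.closure (Set.range Ltrans))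
    (h₃ : F₃ ∈ Subgroup.closure (Set.range Ltrans)) :
    pcomm F₁ (pcomm F₂ F₃) = 1 := by
  obtain ⟨a₁, α₁, β₁, q₁⟩ := mem_aff h₁
  obtain ⟨a₂, α₂, β₂, q₂⟩ := mem_aff h₂
  obtain ⟨a₃, α₃, β₃, q₃⟩ := mem_aff h₃
  have q := Q_pcomm q₁ (Q_pcomm q₂ q₃)
  ext x
  · rw [q x]; dsimp; ring
  · rw [q x]; dsimp; ring
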